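/- Let F be a field with at least 3 elements and let B : F^n → F^m be a linear map whose image has dimension at least 2. Then for every linear map R : F^n → F^m with R ≠ 0 and R ≠ B, there exists a linear map X : F^n → F^m such that X − R is injective while X and X − B are both non-injective. -/

import Mathlib

open Module Submodule Function

/-- A vector space is not the union of two proper subspaces. -/
lemma avoid_two {F V : Type*} [Field F] [AddCommGroup V] [Module F V]
    {p q : Submodule F V} (hp : p ≠ ⊤) (hq : q ≠ ⊤) : ∃ x, x ∉ p ∧ x ∉ q := by
  have hx : ∃ x, x ∉ p := by
    by_contra h; push_neg at h; exact hp (Submodule.eq_top_iff'.mpr h)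
  have hy : ∃ y, y ∉ q := by
    by_contra h; push_neg at h; exact hq (Submodule.eq_top_iff'.mpr h)
  obtain ⟨x, hx⟩ := hx; obtain ⟨y, hy⟩ := hy
  by_cases hxq : x ∉ q
  · exact ⟨x, hx, hxq⟩
  by_cases hyp : y ∉ p
  · exact ⟨y, hyp, hy⟩
  push_neg at hxq hyp
  refine ⟨x + y, fun h => hx ?_, fun h => hy ?_⟩
  · have := p.sub_mem h hyp; simpa using this
  · have := q.sub_mem h hxq; simpa using this

lemma exists_perm_pair {α : Type*} [DecidableEq α] {x1 x2 y1 y2 : α}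
    (hx : x1 ≠ x2) (hy : y1 ≠ y2) : ∃ σ : Equiv.Perm α, σ x1 = y1 ∧ σ x2 = y2 := by
  refine ⟨(Equiv.swap x1 y1).trans (Equiv.swap (Equiv.swap x1 y1 x2) y2), ?_, ?_⟩
  · have h1 : Equiv.swap x1 y1 x1 = y1 := Equiv.swap_apply_left x1 y1
    have h2 : Equiv.swap x1 y1 x2 ≠ y1 := by
      have := (Equiv.swap x1 y1).injective.ne hx.symm
      rwa [h1] at this
    simp only [Equiv.trans_apply, h1]
    rw [Equiv.swap_apply_of_ne_of_ne (Ne.symm h2) hy]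
  · simp only [Equiv.trans_apply]
    exact Equiv.swap_apply_left _ _

/-- Injectivity of `Basis.constr` with linearly independent targets. -/
lemma constr_injective {F M M' ι : Type*} [Field F] [AddCommGroup M] [Module F M]
    [AddCommGroup M'] [Module F M'] (b : Basis ι F M) {g : ι → M'}
    (hg : LinearIndependent F g) : Function.Injective (b.constr F g) := by
  have hco : ⇑(b.constr F g) = ⇑(Finsupp.linearCombination F g) ∘ ⇑b.repr := by
    funext x
    simp [Basis.constr_apply, Finsupp.linearCombination_apply]
  rw [hco]
  exact (show Function.Injective (Finsupp.linearCombination F g) from hg).comp b.repr.injective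

/-- Given linearly independent pairs, an injective linear map sending u ↦ a, w ↦ b. -/
lemma exists_injective_map {F : Type*} [Field F] {m n : ℕ} (hmn : n ≤ m)
    {u w : Fin n → F} {a b : Fin m → F}
    (huw : LinearIndependent F ![u, w]) (hab : LinearIndependent F ![a, b]) :
    ∃ S : (Fin n → F) →ₗ[F] (Fin m → F), Function.Injective S ∧ S u = a ∧ S w = b := by
  classical
  have hu0 : u ≠ 0 := by simpa using huw.ne_zero 0
  have ha0 : a ≠ 0 := by simpa using hab.ne_zero 0
  have hyV := (LinearIndependent.pair_iff' hu0).mp huw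
  have hyW := (LinearIndependent.pair_iff' ha0).mp hab
  have huw' : u ≠ w := by have := hyV 1; simpa using this
  have hab' : a ≠ b := by have := hyW 1; simpa using this
  have hsetV := linearIndepOn_id_pair hu0 hyV
  have hsetW := linearIndepOn_id_pair ha0 hyW
  let bV0 := Module.Basis.extend hsetV
  let bW0 := Module.Basis.extend hsetW
  haveI := FiniteDimensional.fintypeBasisIndex bV0
  haveI := FiniteDimensional.fintypeBasisIndex bW0
  have cardV : Fintype.card (hsetV.extend (Set.subset_univ _)) = n := by
    rw [← Module.finrank_eq_card_basis bV0, Module.finrank_fin_fun]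
  have cardW : Fintype.card (hsetW.extend (Set.subset_univ _)) = m := by
    rw [← Module.finrank_eq_card_basis bW0, Module.finrank_fin_fun]
  let eV := Fintype.equivFinOfCardEq cardV
  let eW := Fintype.equivFinOfCardEq cardW
  let bV := bV0.reindex eV
  let bW := bW0.reindex eW
  have hu_mem : u ∈ hsetV.extend (Set.subset_univ _) :=
    hsetV.subset_extend _ (Set.mem_insert _ _)
  have hw_mem : w ∈ hsetV.extend (Set.subset_univ _) :=
    hsetV.subset_extend _ (Set.mem_insert_of_mem _ rfl)
  have ha_mem : a ∈ hsetW.extend (Set.subset_univ _) :=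
    hsetW.subset_extend _ (Set.mem_insert _ _)
  have hb_mem : b ∈ hsetW.extend (Set.subset_univ _) :=
    hsetW.subset_extend _ (Set.mem_insert_of_mem _ rfl)
  set iu := eV ⟨u, hu_mem⟩ with hiu
  set iw := eV ⟨w, hw_mem⟩ with hiw
  set ja := eW ⟨a, ha_mem⟩ with hja
  set jb := eW ⟨b, hb_mem⟩ with hjb
  have hbViu : bV iu = u := by
    simp only [bV, Module.Basis.reindex_apply, hiu, Equiv.symm_apply_apply]
    exact Module.Basis.extend_apply_self hsetV _
  have hbViw : bV iw = w := by
    simp only [bV, Module.Basis.reindex_apply, hiw, Equiv.symm_apply_apply]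
    exact Module.Basis.extend_apply_self hsetV _
  have hbWja : bW ja = a := by
    simp only [bW, Module.Basis.reindex_apply, hja, Equiv.symm_apply_apply]
    exact Module.Basis.extend_apply_self hsetW _
  have hbWjb : bW jb = b := by
    simp only [bW, Module.Basis.reindex_apply, hjb, Equiv.symm_apply_apply]
    exact Module.Basis.extend_apply_self hsetW _
  have hiuiw : iu ≠ iw := by
    intro h
    apply huw'
    have := eV.injective h
    exact congrArg Subtype.val this
  have hjajb : ja ≠ jb := by
    intro h
    apply hab'
    have := eW.injective h
    exact congrArg Subtype.val this
  have hcast : Fin.castLE hmn iu ≠ Fin.castLE hmn iw :=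
    fun h => hiuiw (Fin.castLE_injective hmn h)
  obtain ⟨σ, hσ1, hσ2⟩ := exists_perm_pair hcast hjajb
  let f : Fin n → Fin m := fun i => σ (Fin.castLE hmn i)
  have hf : Function.Injective f :=
    σ.injective.comp (Fin.castLE_injective hmn)
  let g : Fin n → (Fin m → F) := fun i => bW (f i)
  have hg : LinearIndependent F g := bW.linearIndependent.comp f hf
  refine ⟨bV.constr F g, constr_injective bV hg, ?_, ?_⟩
  · have h1 : bV.constr F g (bV iu) = g iu := bV.constr_basis F g iu
    rw [hbViu] at h1
    rw [h1]
    show bW (σ (Fin.castLE hmn iu)) = a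
    rw [hσ1, hbWja]
  · have h1 : bV.constr F g (bV iw) = g iw := bV.constr_basis F g iw
    rw [hbViw] at h1
    rw [h1]
    show bW (σ (Fin.castLE hmn iw)) = b
    rw [hσ2, hbWjb]

theorem stmt_2 (F : Type*) [Field F]
    (h3 : ∃ a b c : F, a ≠ b ∧ a ≠ c ∧ b ≠ c)
    (m n : ℕ) (hmn : n ≤ m) (hn : 2 ≤ n)
    (B : (Fin n → F) →ₗ[F] (Fin m → F))
    (hrk : 2 ≤ Module.finrank F (LinearMap.range B)) :
    ∀ R : (Fin n → F) →ₗ[F] (Fin m → F), R ≠ 0 → R ≠ B →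
      ∃ X : (Fin n → F) →ₗ[F] (Fin m → F),
        Function.Injective (X - R) ∧ ¬ Function.Injective X ∧ ¬ Function.Injective (X - B) := by
  intro R hR hRB
  classical
  set C := B - R with hC
  have hC0 : C ≠ 0 := sub_ne_zero.mpr (Ne.symm hRB)
  have hBx : ∀ x, B x = R x + C x := by
    intro x; simp [hC]
  -- finrank facts
  have hspan_ne_top : ∀ v : Fin n → F, v ≠ 0 → span F {v} ≠ (⊤ : Submodule F (Fin n → F)) := by
    intro v hv h
    have h1 : Module.finrank F (span F ({v} : Set (Fin n → F))) = 1 := finrank_span_singleton hv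
    rw [h] at h1
    rw [finrank_top, Module.finrank_fin_fun] at h1
    omega
  -- key selection: u w with pairs independent
  obtain ⟨u, w, huw, hab⟩ :
      ∃ u w : Fin n → F, LinearIndependent F ![u, w] ∧
        LinearIndependent F ![-(R u), C w] := by
    obtain ⟨w0, hw0⟩ : ∃ w0, C w0 ≠ 0 := by
      by_contra h; push_neg at h
      exact hC0 (LinearMap.ext fun x => by simpa using h x)
    have hw0' : w0 ≠ 0 := fun h => hw0 (by rw [h]; simp)
    by_cases hP : Submodule.comap R (span F {C w0}) = ⊤
    · -- range R ⊆ L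
      have hall : ∀ x, R x ∈ span F ({C w0} : Set (Fin m → F)) := by
        intro x
        exact Submodule.mem_comap.mp (hP ▸ Submodule.mem_top : x ∈ Submodule.comap R (span F {C w0}))
      have hQ : Submodule.comap C (span F ({C w0} : Set (Fin m → F))) ≠ ⊤ := by
        intro h
        have hallC : ∀ x, C x ∈ span F ({C w0} : Set (Fin m → F)) := by
          intro x
          exact Submodule.mem_comap.mp (h ▸ Submodule.mem_top : x ∈ Submodule.comap C (span F {C w0}))
        have hBle : LinearMap.range B ≤ span F ({C w0} : Set (Fin m → F)) := by
          rintro _ ⟨x, rfl⟩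
          rw [hBx x]
          exact Submodule.add_mem _ (hall x) (hallC x)
        have h2 := Submodule.finrank_mono hBle
        rw [finrank_span_singleton hw0] at h2
        omega
      obtain ⟨u0, hu0⟩ : ∃ u0, R u0 ≠ 0 := by
        by_contra h; push_neg at h
        exact hR (LinearMap.ext fun x => by simpa using h x)
      have hu0' : u0 ≠ 0 := fun h => hu0 (by rw [h]; simp)
      obtain ⟨w, hw1, hw2⟩ := avoid_two hQ (hspan_ne_top u0 hu0')
      rw [Submodule.mem_comap] at hw1
      refine ⟨u0, w, ?_, ?_⟩
      · rw [LinearIndependent.pair_iff' hu0']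
        intro c hcw
        exact hw2 (Submodule.mem_span_singleton.mpr ⟨c, hcw⟩)
      · rw [LinearIndependent.pair_iff' (by simpa using hu0)]
        intro c hcw
        apply hw1
        have : C w = (-c) • R u0 := by rw [← hcw]; simp
        rw [this]
        exact Submodule.smul_mem _ _ (hall u0)
    · obtain ⟨u, hu1, hu2⟩ := avoid_two hP (hspan_ne_top w0 hw0')
      rw [Submodule.mem_comap] at hu1
      have hu0 : u ≠ 0 := by
        intro h
        apply hu1
        rw [h]; simp
      refine ⟨u, w0, ?_, ?_⟩
      · rw [linearIndependent_fin2]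
        refine ⟨by simpa using hw0', fun c hcw => ?_⟩
        simp only [Matrix.cons_val_one, Matrix.head_cons, Matrix.cons_val_zero] at hcw
        exact hu2 (Submodule.mem_span_singleton.mpr ⟨c, hcw⟩)
      · rw [linearIndependent_fin2]
        refine ⟨by simpa using hw0, fun c hcw => ?_⟩
        simp only [Matrix.cons_val_one, Matrix.head_cons, Matrix.cons_val_zero] at hcw
        apply hu1
        have : R u = (-c) • C w0 := by rw [neg_smul, hcw]; simp
        rw [this]
        exact Submodule.smul_mem _ _ (Submodule.mem_span_singleton_self _)
  -- build injective S with S u = -(R u), S w = C w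
  obtain ⟨S, hSinj, hSu, hSw⟩ := exists_injective_map hmn huw hab
  have hu0 : u ≠ 0 := by simpa using huw.ne_zero 0
  have hw0 : w ≠ 0 := by simpa using huw.ne_zero 1
  refine ⟨R + S, ?_, ?_, ?_⟩
  · have : R + S - R = S := by abel
    rw [this]; exact hSinj
  · intro h
    apply hu0
    have hXu : (R + S) u = (R + S) 0 := by
      simp [LinearMap.add_apply, hSu, map_zero]
    exact h hXu
  · intro h
    apply hw0
    have hXw : (R + S - B) w = (R + S - B) 0 := by
      simp only [LinearMap.sub_apply, LinearMap.add_apply, hSw, map_zero]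
      rw [hBx w]
      abel
    exact h hXw
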